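/- arXiv:1305.0457 — 2 statements merged into one kernel-verified Lean document; each statement's English description precedes it below -/
import Mathlib

section
/- For every λ ≤ 0, the Fourier multiplier a(D) with symbol a(ξ) = e^{λ⟨ξ⟩}, ⟨ξ⟩ = (1+|ξ|²)^{1/2}, is bounded on L^∞(ℝ^d) with operator norm bounded by a constant K independent of λ: ‖a(D)f‖_{L^∞} ≤ K‖f‖_{L^∞} for all f ∈ L^∞(ℝ^d). -/
open MeasureTheory Real Set
open scoped FourierTransform ENNReal RealInnerProductSpace

noncomputable section

namespace ExpBracketAux

lemma exp_neg_le {x : ℝ} (hx : 0 < x) (n : ℕ) :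
    rexp (-x) ≤ n.factorial / x ^ n := by
  have h : x ^ n ≤ n.factorial * rexp x := by
    have h1 := Real.pow_div_factorial_le_exp x hx.le n
    rw [div_le_iff₀ (by positivity)] at h1
    linarith
  have hinv : rexp (-x) * rexp x = 1 := by
    rw [← Real.exp_add]; simp
  rw [le_div_iff₀ (by positivity : (0:ℝ) < x ^ n)]
  calc rexp (-x) * x ^ n ≤ rexp (-x) * (n.factorial * rexp x) := by
        exact mul_le_mul_of_nonneg_left h (Real.exp_pos _).le
    _ = (n.factorial : ℝ) * (rexp (-x) * rexp x) := by ring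
    _ = n.factorial := by rw [hinv, mul_one]

lemma measurable_aux (a s p : ℝ) :
    Measurable (fun u : ℝ => u ^ p * rexp (-(a / u) - s * u)) := by
  fun_prop

lemma integrableOn_aux {a s : ℝ} (ha : 0 < a) (hs : 0 < s) (p : ℝ) :
    IntegrableOn (fun u : ℝ => u ^ p * rexp (-(a / u) - s * u)) (Ioi 0) := by
  set n : ℕ := ⌈-p⌉₊ + 1 with hn
  have hnp : (0:ℝ) ≤ p + n := by
    have := Nat.le_ceil (-p)
    push_cast [hn]
    linarith
  have hint : IntegrableOn
      (fun u : ℝ => (n.factorial / a ^ n) * (u ^ (p + n) * rexp (-s * u))) (Ioi 0) := by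
    apply Integrable.const_mul
    have := integrableOn_rpow_mul_exp_neg_mul_rpow (p := 1) (s := p + n) (b := s)
      (by linarith) one_pos hs
    simpa [Real.rpow_one, IntegrableOn] using this
  refine hint.mono' ((measurable_aux a s p).aestronglyMeasurable) ?_
  filter_upwards [self_mem_ae_restrict measurableSet_Ioi] with u hu
  have hu0 : (0:ℝ) < u := hu
  have h1 : rexp (-(a / u) - s * u) = rexp (-(a/u)) * rexp (-(s*u)) := by
    rw [← Real.exp_add]; ring_nf
  have h2 : rexp (-(a/u)) ≤ n.factorial / (a/u) ^ n := exp_neg_le (by positivity) n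
  have h3 : (n.factorial : ℝ) / (a/u) ^ n = (n.factorial / a ^ n) * u ^ (n:ℝ) := by
    rw [div_pow, Real.rpow_natCast]
    field_simp
  rw [Real.norm_eq_abs, abs_of_nonneg (by positivity)]
  calc u ^ p * rexp (-(a / u) - s * u)
      = u ^ p * rexp (-(a/u)) * rexp (-(s*u)) := by rw [h1]; ring
    _ ≤ u ^ p * ((n.factorial / a ^ n) * u ^ (n:ℝ)) * rexp (-(s*u)) := by
        apply mul_le_mul_of_nonneg_right _ (Real.exp_pos _).le
        apply mul_le_mul_of_nonneg_left _ (by positivity)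
        rw [← h3]; exact h2
    _ = (n.factorial / a ^ n) * (u ^ (p + n) * rexp (-s * u)) := by
        rw [Real.rpow_add hu0]
        ring_nf

lemma reflect_eq {a s : ℝ} (ha : 0 < a) (hs : 0 < s) :
    ∫ u in Ioi (0:ℝ), u ^ (-(1:ℝ)/2) * rexp (-(a/u) - s*u)
      = √(a/s) * ∫ u in Ioi (0:ℝ), u ^ (-(3:ℝ)/2) * rexp (-(a/u) - s*u) := by
  set c : ℝ := a / s with hc
  have hc0 : 0 < c := by positivity
  have himg : (fun u : ℝ => c / u) '' (Ioi 0) = Ioi 0 := by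
    ext w
    constructor
    · rintro ⟨u, hu, rfl⟩
      exact div_pos hc0 hu
    · intro hw
      exact ⟨c / w, div_pos hc0 hw, by field_simp⟩
  have hder : ∀ u ∈ Ioi (0:ℝ), HasDerivWithinAt (fun u : ℝ => c / u) (-(c / u^2)) (Ioi 0) u := by
    intro u hu
    have h := ((hasDerivAt_inv (ne_of_gt hu)).const_mul c)
    have : c * -(u^2)⁻¹ = -(c / u^2) := by field_simp
    simpa [div_eq_mul_inv, this] using h.hasDerivWithinAt
  have hinj : InjOn (fun u : ℝ => c / u) (Ioi 0) := by
    intro x hx y hy h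
    have hx0 : (0:ℝ) < x := hx
    have hy0 : (0:ℝ) < y := hy
    field_simp at h
    exact h.symm
  have key := integral_image_eq_integral_abs_deriv_smul measurableSet_Ioi hder hinj
      (fun w => w ^ (-(1:ℝ)/2) * rexp (-(a/w) - s*w))
  rw [himg] at key
  rw [key, ← integral_const_mul]
  apply setIntegral_congr_fun measurableSet_Ioi
  intro u hu
  have hu0 : (0:ℝ) < u := hu
  have h1 : a / (c / u) = s * u := by rw [hc]; field_simp; try ring
  have h2 : s * (c / u) = a / u := by rw [hc]; field_simp; try ring
  have habs : |(-(c / u^2))| = c / u^2 := by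
    rw [abs_neg, abs_of_pos (by positivity)]
  have hrpow : (c / u) ^ (-(1:ℝ)/2) = c ^ (-(1:ℝ)/2) / u ^ (-(1:ℝ)/2) :=
    Real.div_rpow hc0.le hu0.le _
  have hfinal : c / u ^ 2 * (c ^ (-(1:ℝ)/2) / u ^ (-(1:ℝ)/2)) = √c * u ^ (-(3:ℝ)/2) := by
    have l1 : c / u ^ 2 = c ^ (1:ℝ) * u ^ (-(2:ℝ)) := by
      rw [Real.rpow_one, Real.rpow_neg hu0.le,
        show ((2:ℝ)) = ((2:ℕ):ℝ) by norm_num, Real.rpow_natCast, div_eq_mul_inv]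
    have l2 : c ^ (-(1:ℝ)/2) / u ^ (-(1:ℝ)/2) = c ^ (-(1:ℝ)/2) * u ^ ((1:ℝ)/2) := by
      rw [div_eq_mul_inv, ← Real.rpow_neg hu0.le]
      norm_num
    rw [l1, l2, Real.sqrt_eq_rpow,
      show c ^ (1:ℝ) * u ^ (-(2:ℝ)) * (c ^ (-(1:ℝ)/2) * u ^ ((1:ℝ)/2))
        = (c ^ (1:ℝ) * c ^ (-(1:ℝ)/2)) * (u ^ (-(2:ℝ)) * u ^ ((1:ℝ)/2)) by ring,
      ← Real.rpow_add hc0, ← Real.rpow_add hu0]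
    norm_num
  calc |(-(c / u^2))| • ((c/u) ^ (-(1:ℝ)/2) * rexp (-(a/(c/u)) - s*(c/u)))
      = (c / u^2) * ((c ^ (-(1:ℝ)/2) / u ^ (-(1:ℝ)/2)) * rexp (-(s*u) - a/u)) := by
        rw [habs, hrpow, h1, h2, smul_eq_mul]
    _ = (c / u ^ 2 * (c ^ (-(1:ℝ)/2) / u ^ (-(1:ℝ)/2))) * rexp (-(a/u) - s*u) := by
        rw [show -(s*u) - a/u = -(a/u) - s*u by ring]; ring
    _ = √c * (u ^ (-(3:ℝ)/2) * rexp (-(a/u) - s*u)) := by rw [hfinal]; ring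

lemma psi_image {a s : ℝ} (ha : 0 < a) (hs : 0 < s) :
    (fun u : ℝ => √s * √u - √a / √u) '' (Ioi 0) = univ := by
  set ψ : ℝ → ℝ := fun u => √s * √u - √a / √u with hψ
  have ha' : 0 < √a := Real.sqrt_pos.mpr ha
  have hs' : 0 < √s := Real.sqrt_pos.mpr hs
  apply eq_univ_of_forall
  intro w
  -- lower point
  set u₁ : ℝ := min 1 ((√a / (|w| + √s + 1)) ^ 2) with hu₁
  have hd : (0:ℝ) < |w| + √s + 1 := by positivity
  have hu₁0 : 0 < u₁ := by
    apply lt_min one_pos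
    positivity
  have hsu₁ : √u₁ ≤ √a / (|w| + √s + 1) := by
    calc √u₁ ≤ √((√a / (|w| + √s + 1)) ^ 2) := Real.sqrt_le_sqrt (min_le_right _ _)
      _ = √a / (|w| + √s + 1) := Real.sqrt_sq (by positivity)
  have hψu₁ : ψ u₁ ≤ w := by
    have h1 : √s * √u₁ ≤ √s := by
      have : √u₁ ≤ 1 := by
        calc √u₁ ≤ √1 := Real.sqrt_le_sqrt (min_le_left _ _)
          _ = 1 := Real.sqrt_one
      nlinarith
    have h2 : |w| + √s + 1 ≤ √a / √u₁ := by
      rw [le_div_iff₀ (Real.sqrt_pos.mpr hu₁0)]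
      calc (|w| + √s + 1) * √u₁ ≤ (|w| + √s + 1) * (√a / (|w| + √s + 1)) := by
            exact mul_le_mul_of_nonneg_left hsu₁ hd.le
        _ = √a := by field_simp
    have := neg_abs_le w
    simp only [hψ]
    nlinarith
  -- upper point
  set u₂ : ℝ := max 1 (((|w| + √a) / √s) ^ 2) with hu₂
  have hu₂0 : 0 < u₂ := lt_max_of_lt_left one_pos
  have hsu₂ : (|w| + √a) / √s ≤ √u₂ := by
    calc (|w| + √a) / √s = √(((|w| + √a) / √s) ^ 2) := (Real.sqrt_sq (by positivity)).symm
      _ ≤ √u₂ := Real.sqrt_le_sqrt (le_max_right _ _)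
  have hψu₂ : w ≤ ψ u₂ := by
    have h1 : √a / √u₂ ≤ √a := by
      have h1u : (1:ℝ) ≤ √u₂ := by
        calc (1:ℝ) = √1 := Real.sqrt_one.symm
          _ ≤ √u₂ := Real.sqrt_le_sqrt (le_max_left _ _)
      rw [div_le_iff₀ (by positivity)]
      nlinarith
    have h2 : |w| + √a ≤ √s * √u₂ := by
      rw [← div_le_iff₀' hs']
      exact hsu₂
    have := le_abs_self w
    simp only [hψ]
    nlinarith
  -- continuity on the interval
  have hcont : ContinuousOn ψ (Ioi 0) := by
    apply ContinuousOn.sub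
    · exact (continuousOn_const.mul (Real.continuous_sqrt.continuousOn))
    · apply ContinuousOn.div continuousOn_const Real.continuous_sqrt.continuousOn
      intro x hx
      exact (Real.sqrt_pos.mpr hx).ne'
  have hsub : uIcc u₁ u₂ ⊆ Ioi 0 := by
    intro z hz
    have := hz.1
    calc (0:ℝ) < min u₁ u₂ := lt_min hu₁0 hu₂0
      _ ≤ z := by simpa [uIcc] using hz.1
  have hw : w ∈ uIcc (ψ u₁) (ψ u₂) := by
    rw [mem_uIcc]
    left
    exact ⟨hψu₁, hψu₂⟩
  have := intermediate_value_uIcc (hcont.mono hsub) hw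
  obtain ⟨z, hz, hzw⟩ := this
  exact ⟨z, hsub hz, hzw⟩

lemma psi_deriv {a s : ℝ} (u : ℝ) (hu : u ∈ Ioi (0:ℝ)) :
    HasDerivWithinAt (fun u : ℝ => √s * √u - √a / √u)
      (√s / (2 * √u) + √a / (2 * u * √u)) (Ioi 0) u := by
  have hu0 : (0:ℝ) < u := hu
  have hsu : (0:ℝ) < √u := Real.sqrt_pos.mpr hu0
  have h1 : HasDerivAt (fun u : ℝ => √s * √u) (√s * (1 / (2 * √u))) u :=
    (Real.hasDerivAt_sqrt hu0.ne').const_mul (√s)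
  have h2 : HasDerivAt (fun u : ℝ => √a / √u) (√a * (-(1 / (2 * √u)) / (√u) ^ 2)) u := by
    have := ((Real.hasDerivAt_sqrt hu0.ne').div_const (1:ℝ))
    have hinv : HasDerivAt (fun u : ℝ => (√u)⁻¹) (-(1 / (2 * √u)) / (√u) ^ 2) u :=
      (Real.hasDerivAt_sqrt hu0.ne').inv hsu.ne'
    simpa [div_eq_mul_inv] using hinv.const_mul (√a)
  have h := (h1.sub h2).hasDerivWithinAt (s := Ioi 0)
  refine h.congr_deriv ?_
  have hsq : (√u) ^ 2 = u := Real.sq_sqrt hu0.le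
  rw [hsq]
  field_simp
  ring

lemma psi_inj {a s : ℝ} (ha : 0 < a) (hs : 0 < s) :
    InjOn (fun u : ℝ => √s * √u - √a / √u) (Ioi 0) := by
  have ha' : 0 < √a := Real.sqrt_pos.mpr ha
  have hs' : 0 < √s := Real.sqrt_pos.mpr hs
  have : StrictMonoOn (fun u : ℝ => √s * √u - √a / √u) (Ioi 0) := by
    intro x hx y hy hxy
    have hx0 : (0:ℝ) < x := hx
    have hy0 : (0:ℝ) < y := hy
    have hsx : 0 < √x := Real.sqrt_pos.mpr hx0
    have hsy : 0 < √y := Real.sqrt_pos.mpr hy0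
    have h1 : √x < √y := Real.sqrt_lt_sqrt hx0.le hxy
    have h2 : √s * √x < √s * √y := by nlinarith
    have h3 : √a / √y ≤ √a / √x := by
      apply div_le_div_of_nonneg_left ha'.le hsx h1.le
    simp only []
    nlinarith
  exact this.injOn

lemma I_eq {a s : ℝ} (ha : 0 < a) (hs : 0 < s) :
    ∫ u in Ioi (0:ℝ), u ^ (-(3:ℝ)/2) * rexp (-(a/u) - s*u)
      = √π / √a * rexp (-(2 * √a * √s)) := by
  have ha' : 0 < √a := Real.sqrt_pos.mpr ha
  have hs' : 0 < √s := Real.sqrt_pos.mpr hs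
  have hπ : 0 < √π := Real.sqrt_pos.mpr Real.pi_pos
  have key := integral_image_eq_integral_abs_deriv_smul measurableSet_Ioi
    (fun u hu => psi_deriv (a := a) (s := s) u hu) (psi_inj ha hs)
    (fun w => rexp (-(w ^ 2)))
  rw [psi_image ha hs] at key
  have hgauss : ∫ w : ℝ in univ, rexp (-(w ^ 2)) = √π := by
    rw [MeasureTheory.setIntegral_univ]
    simpa using integral_gaussian 1
  rw [hgauss] at key
  -- rewrite the RHS integrand
  have hcongr : ∀ u ∈ Ioi (0:ℝ),
      |√s / (2 * √u) + √a / (2 * u * √u)| •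
        rexp (-((√s * √u - √a / √u) ^ 2))
      = rexp (2 * √a * √s) *
          ((√s / 2) * (u ^ (-(1:ℝ)/2) * rexp (-(a/u) - s*u))
            + (√a / 2) * (u ^ (-(3:ℝ)/2) * rexp (-(a/u) - s*u))) := by
    intro u hu
    have hu0 : (0:ℝ) < u := hu
    have hsu : (0:ℝ) < √u := Real.sqrt_pos.mpr hu0
    have hsqa : (√a) ^ 2 = a := Real.sq_sqrt ha.le
    have hsqs : (√s) ^ 2 = s := Real.sq_sqrt hs.le
    have hsqu : (√u) ^ 2 = u := Real.sq_sqrt hu0.le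
    have habs : |√s / (2 * √u) + √a / (2 * u * √u)| = √s / (2 * √u) + √a / (2 * u * √u) := by
      apply abs_of_pos
      positivity
    have hexp : rexp (-((√s * √u - √a / √u) ^ 2))
        = rexp (2 * √a * √s) * rexp (-(a/u) - s*u) := by
      rw [← Real.exp_add]
      congr 1
      have h4 : √u ^ 4 = u ^ 2 := by nlinarith [Real.sq_sqrt hu0.le]
      have : (√s * √u - √a / √u) ^ 2 = s * u - 2 * √s * √a + a / u := by
        field_simp
        ring_nf
        rw [Real.sq_sqrt ha.le, Real.sq_sqrt hs.le, h4]
        try rw [Real.sq_sqrt hu0.le]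
        ring
      rw [this]
      ring
    have hr1 : u ^ (-(1:ℝ)/2) = (√u)⁻¹ := by
      rw [Real.sqrt_eq_rpow, ← Real.rpow_neg hu0.le]
      norm_num
    have hr3 : u ^ (-(3:ℝ)/2) = (u * √u)⁻¹ := by
      rw [Real.sqrt_eq_rpow]
      rw [show (u : ℝ) * u ^ (1/(2:ℝ)) = u ^ (1:ℝ) * u ^ (1/(2:ℝ)) by rw [Real.rpow_one]]
      rw [← Real.rpow_add hu0, ← Real.rpow_neg hu0.le]
      norm_num
    rw [habs, smul_eq_mul, hexp, hr1, hr3]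
    field_simp
  rw [MeasureTheory.setIntegral_congr_fun measurableSet_Ioi hcongr] at key
  rw [MeasureTheory.integral_const_mul] at key
  have hint1 : IntegrableOn
      (fun u : ℝ => (√s / 2) * (u ^ (-(1:ℝ)/2) * rexp (-(a/u) - s*u))) (Ioi 0) :=
    (integrableOn_aux ha hs _).const_mul _
  have hint2 : IntegrableOn
      (fun u : ℝ => (√a / 2) * (u ^ (-(3:ℝ)/2) * rexp (-(a/u) - s*u))) (Ioi 0) :=
    (integrableOn_aux ha hs _).const_mul _
  rw [MeasureTheory.integral_add hint1 hint2, MeasureTheory.integral_const_mul,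
    MeasureTheory.integral_const_mul] at key
  rw [reflect_eq ha hs] at key
  set I : ℝ := ∫ u in Ioi (0:ℝ), u ^ (-(3:ℝ)/2) * rexp (-(a/u) - s*u) with hI
  have hcoef : √s / 2 * (√(a/s) * I) + √a / 2 * I = √a * I := by
    have : √s * √(a/s) = √a := by
      rw [← Real.sqrt_mul hs.le]
      congr 1
      field_simp
    linear_combination (I/2) * this
  rw [hcoef] at key
  -- key : √π = rexp (2*√a*√s) * (√a * I)
  have hexp0 : rexp (2 * √a * √s) ≠ 0 := (Real.exp_pos _).ne'
  rw [key]
  rw [Real.exp_neg]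
  field_simp

/-- The subordination density. -/
def rho (t u : ℝ) : ℝ := t / (2 * √π) * (u ^ (-(3:ℝ)/2) * rexp (-(t^2/4) / u))

lemma rho_nonneg {t : ℝ} (ht : 0 ≤ t) {u : ℝ} (hu : 0 < u) : 0 ≤ rho t u := by
  have h1 : (0:ℝ) ≤ u ^ (-(3:ℝ)/2) := Real.rpow_nonneg hu.le _
  have h2 : (0:ℝ) < √π := Real.sqrt_pos.mpr Real.pi_pos
  have : (0:ℝ) ≤ t / (2 * √π) := by positivity
  exact mul_nonneg this (mul_nonneg h1 (Real.exp_pos _).le)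

lemma rho_mul_exp (t s u : ℝ) :
    rho t u * rexp (-(s*u))
      = (t / (2 * √π)) * (u ^ (-(3:ℝ)/2) * rexp (-((t^2/4)/u) - s*u)) := by
  have : rexp (-((t^2/4)/u) - s*u) = rexp (-(t^2/4) / u) * rexp (-(s*u)) := by
    rw [← Real.exp_add]; congr 1; ring
  rw [rho, this]; ring

lemma rho_measurable (t : ℝ) : Measurable (rho t) := by
  unfold rho; fun_prop

lemma rho_integrableOn {t s : ℝ} (ht : 0 < t) (hs : 0 < s) :
    IntegrableOn (fun u => rho t u * rexp (-(s*u))) (Ioi 0) := by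
  have h : (fun u => rho t u * rexp (-(s*u)))
      = fun u => (t / (2 * √π)) * (u ^ (-(3:ℝ)/2) * rexp (-((t^2/4)/u) - s*u)) :=
    funext fun u => rho_mul_exp t s u
  rw [h]
  exact (integrableOn_aux (by positivity) hs _).const_mul _

lemma rho_integral {t s : ℝ} (ht : 0 < t) (hs : 0 < s) :
    ∫ u in Ioi (0:ℝ), rho t u * rexp (-(s*u)) = rexp (-(t * √s)) := by
  simp_rw [rho_mul_exp t s]
  rw [MeasureTheory.integral_const_mul, I_eq (by positivity : (0:ℝ) < t^2/4) hs]
  have h2 : √(t^2/4) = t/2 := by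
    rw [show t^2/4 = (t/2)^2 by ring, Real.sqrt_sq (by positivity)]
  rw [h2]
  have hπ : (0:ℝ) < √π := Real.sqrt_pos.mpr Real.pi_pos
  have : 2 * (t/2) * √s = t * √s := by ring
  rw [this]
  field_simp

lemma le_sqrt_one_add_sq {x : ℝ} (hx : 0 ≤ x) : (1 + x)/2 ≤ √(1 + x^2) := by
  rw [show (1+x)/2 = √(((1+x)/2)^2) from (Real.sqrt_sq (by positivity)).symm]
  apply Real.sqrt_le_sqrt
  nlinarith

lemma symbol_integrable (d : ℕ) {t : ℝ} (ht : 0 < t) :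
    Integrable (fun ξ : EuclideanSpace ℝ (Fin d) => rexp (-(t * √(1 + ‖ξ‖^2)))) := by
  have hnr : ((Module.finrank ℝ (EuclideanSpace ℝ (Fin d)) : ℝ)) < ((d:ℝ) + 1) := by
    rw [finrank_euclideanSpace_fin]; linarith
  have hbase := integrable_one_add_norm (E := EuclideanSpace ℝ (Fin d)) (μ := volume)
    (r := (d:ℝ)+1) hnr
  refine (hbase.const_mul ((d+1).factorial / (t/2)^(d+1))).mono' ?_ ?_
  · apply Continuous.aestronglyMeasurable
    continuity
  · apply ae_of_all
    intro ξ
    have hx : (0:ℝ) ≤ ‖ξ‖ := norm_nonneg _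
    have h0 : (0:ℝ) < 1 + ‖ξ‖ := by positivity
    have h1 : t/2 * (1 + ‖ξ‖) ≤ t * √(1 + ‖ξ‖^2) := by
      have := le_sqrt_one_add_sq hx
      nlinarith
    have h2 : rexp (-(t * √(1 + ‖ξ‖^2))) ≤ rexp (-(t/2 * (1 + ‖ξ‖))) :=
      Real.exp_le_exp.mpr (by linarith)
    have h3 : rexp (-(t/2 * (1 + ‖ξ‖))) ≤ (d+1).factorial / (t/2 * (1 + ‖ξ‖)) ^ (d+1) :=
      exp_neg_le (by positivity) (d+1)
    have h4 : ((1:ℝ) + ‖ξ‖) ^ (-((d:ℝ)+1)) = ((1 + ‖ξ‖) ^ (d+1 : ℕ))⁻¹ := by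
      rw [Real.rpow_neg h0.le, show ((d:ℝ)+1) = ((d+1 : ℕ) : ℝ) by push_cast; ring,
        Real.rpow_natCast]
    rw [Real.norm_eq_abs, abs_of_pos (Real.exp_pos _)]
    calc rexp (-(t * √(1 + ‖ξ‖^2)))
        ≤ (d+1).factorial / (t/2 * (1 + ‖ξ‖)) ^ (d+1) := le_trans h2 h3
      _ = (d+1).factorial / (t/2)^(d+1) * ((1 + ‖ξ‖) ^ (d+1 : ℕ))⁻¹ := by
          rw [mul_pow]; field_simp
      _ = (d+1).factorial / (t/2)^(d+1) * (1 + ‖ξ‖) ^ (-((d:ℝ)+1)) := by rw [h4]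

lemma gauss_fourier (d : ℕ) {u : ℝ} (hu : 0 < u) (y : EuclideanSpace ℝ (Fin d)) :
    (𝓕⁻ (fun ξ : EuclideanSpace ℝ (Fin d) => ((rexp (-(u * ‖ξ‖^2)) : ℝ) : ℂ))) y
      = (((π/u) ^ ((d:ℝ)/2) * rexp (-(π^2 * ‖y‖^2) / u) : ℝ) : ℂ) := by
  have hfun : (fun ξ : EuclideanSpace ℝ (Fin d) => ((rexp (-(u * ‖ξ‖^2)) : ℝ) : ℂ))
      = fun ξ : EuclideanSpace ℝ (Fin d) => Complex.exp (-(u:ℂ) * (‖ξ‖:ℂ)^2) := by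
    funext ξ
    rw [Complex.ofReal_exp]
    push_cast
    ring_nf
  rw [hfun, Real.fourierInv_eq_fourier_neg,
    fourier_gaussian_innerProductSpace (by simpa using hu : 0 < ((u:ℂ)).re)]
  rw [finrank_euclideanSpace_fin, norm_neg]
  have h1 : (↑π / (u:ℂ)) = (((π/u : ℝ)) : ℂ) := by push_cast; ring
  have h2 : ((d:ℂ)/2) = (((d:ℝ)/2 : ℝ) : ℂ) := by push_cast; ring
  rw [h1, h2, ← Complex.ofReal_cpow (by positivity) ((d:ℝ)/2)]
  have h3 : -(π:ℂ)^2 * (‖y‖:ℂ)^2 / (u:ℂ) = (((-(π^2 * ‖y‖^2)/u : ℝ)) : ℂ) := by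
    push_cast; ring
  rw [h3, ← Complex.ofReal_exp, ← Complex.ofReal_mul]

lemma gauss_integrable (d : ℕ) {u : ℝ} (hu : 0 < u) :
    Integrable (fun y : EuclideanSpace ℝ (Fin d) =>
      (π/u) ^ ((d:ℝ)/2) * rexp (-(π^2 * ‖y‖^2) / u)) := by
  have hb : (0:ℝ) < π^2/u := by positivity
  have h := (GaussianFourier.integrable_cexp_neg_mul_sq_norm_add (V := EuclideanSpace ℝ (Fin d))
    (b := ((π^2/u : ℝ) : ℂ)) (by rw [Complex.ofReal_re]; exact hb) 0 0).norm
  have heq : (fun v : EuclideanSpace ℝ (Fin d) =>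
      ‖Complex.exp (-((π^2/u : ℝ) : ℂ) * (‖v‖:ℂ)^2 + 0 * ((inner ℝ (0 : EuclideanSpace ℝ (Fin d)) v : ℝ) : ℂ))‖)
      = fun v : EuclideanSpace ℝ (Fin d) => rexp (-(π^2 * ‖v‖^2) / u) := by
    funext v
    have : -((π^2/u : ℝ) : ℂ) * (‖v‖:ℂ)^2 + 0 * ((inner ℝ (0 : EuclideanSpace ℝ (Fin d)) v : ℝ) : ℂ)
        = (((-(π^2 * ‖v‖^2)/u : ℝ)) : ℂ) := by push_cast; ring
    rw [this, Complex.norm_exp_ofReal]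
  rw [heq] at h
  exact h.const_mul _

lemma gauss_integral (d : ℕ) {u : ℝ} (hu : 0 < u) :
    ∫ y : EuclideanSpace ℝ (Fin d), (π/u) ^ ((d:ℝ)/2) * rexp (-(π^2 * ‖y‖^2) / u) = 1 := by
  have hb : (0:ℝ) < π^2/u := by positivity
  have h1 : (fun y : EuclideanSpace ℝ (Fin d) => rexp (-(π^2 * ‖y‖^2) / u))
      = fun y : EuclideanSpace ℝ (Fin d) => rexp (-(π^2/u) * ‖y‖^2) := by
    funext y; congr 1; ring
  rw [MeasureTheory.integral_const_mul, h1, GaussianFourier.integral_rexp_neg_mul_sq_norm hb,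
    finrank_euclideanSpace_fin]
  rw [← Real.mul_rpow (by positivity) (by positivity)]
  rw [show π/u * (π/(π^2/u)) = 1 by field_simp]
  exact Real.one_rpow _

/-- The integrand of the Fubini argument for the kernel. -/
def Fker (d : ℕ) (t : ℝ) (y ξ : EuclideanSpace ℝ (Fin d)) (u : ℝ) : ℂ :=
  ((𝐞 ⟪ξ, y⟫ : Circle) : ℂ) * ((rho t u * rexp (-(u * (1 + ‖ξ‖^2))) : ℝ) : ℂ)

lemma Fker_meas (d : ℕ) (t : ℝ) (y : EuclideanSpace ℝ (Fin d)) :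
    AEStronglyMeasurable (Function.uncurry (Fker d t y))
      ((volume : Measure (EuclideanSpace ℝ (Fin d))).prod (volume.restrict (Ioi 0))) := by
  apply Measurable.aestronglyMeasurable
  apply Measurable.mul
  · apply Continuous.measurable
    exact continuous_subtype_val.comp
      (Real.continuous_fourierChar.comp (continuous_fst.inner continuous_const))
  · apply Complex.measurable_ofReal.comp
    apply Measurable.mul
    · exact (rho_measurable t).comp measurable_snd
    · apply Real.measurable_exp.comp
      fun_prop

lemma Fker_slice_integrable (d : ℕ) {t : ℝ} (ht : 0 < t) (y ξ : EuclideanSpace ℝ (Fin d)) :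
    Integrable (fun u => Fker d t y ξ u) (volume.restrict (Ioi 0)) := by
  have hs : (0:ℝ) < 1 + ‖ξ‖^2 := by positivity
  have h1 : IntegrableOn (fun u : ℝ => rho t u * rexp (-(u * (1+‖ξ‖^2)))) (Ioi 0) := by
    rw [show (fun u : ℝ => rho t u * rexp (-(u * (1+‖ξ‖^2))))
        = fun u : ℝ => rho t u * rexp (-((1+‖ξ‖^2) * u)) from funext fun u => by
          rw [mul_comm u]]
    exact rho_integrableOn ht hs
  exact (h1.ofReal (𝕜 := ℂ)).const_mul _

lemma symbol_eq_integral (d : ℕ) {t : ℝ} (ht : 0 < t) (ξ : EuclideanSpace ℝ (Fin d)) :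
    ((rexp (-(t * √(1 + ‖ξ‖^2))) : ℝ) : ℂ)
      = ∫ u in Ioi (0:ℝ), ((rho t u * rexp (-(u * (1 + ‖ξ‖^2))) : ℝ) : ℂ) := by
  have hs : (0:ℝ) < 1 + ‖ξ‖^2 := by positivity
  have hreal : ∫ u in Ioi (0:ℝ), rho t u * rexp (-(u * (1+‖ξ‖^2)))
      = rexp (-(t * √(1 + ‖ξ‖^2))) := by
    rw [show (fun u : ℝ => rho t u * rexp (-(u * (1+‖ξ‖^2))))
        = fun u : ℝ => rho t u * rexp (-((1+‖ξ‖^2) * u)) from funext fun u => by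
          rw [mul_comm u]]
    exact rho_integral ht hs
  rw [← hreal]
  exact integral_ofReal.symm

lemma Fker_norm (d : ℕ) {t : ℝ} (ht : 0 < t) (y ξ : EuclideanSpace ℝ (Fin d)) :
    ∀ u ∈ Ioi (0:ℝ), ‖Fker d t y ξ u‖ = rho t u * rexp (-((1+‖ξ‖^2) * u)) := by
  intro u hu
  rw [Fker, norm_mul,
    show ‖((𝐞 ⟪ξ, y⟫ : Circle) : ℂ)‖ = 1 from by
      rw [Circle.norm_coe],
    one_mul, Complex.norm_real, Real.norm_eq_abs,
    abs_of_nonneg (mul_nonneg (rho_nonneg ht.le hu) (Real.exp_pos _).le),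
    mul_comm u]

lemma Fker_int (d : ℕ) {t : ℝ} (ht : 0 < t) (y : EuclideanSpace ℝ (Fin d)) :
    Integrable (Function.uncurry (Fker d t y))
      ((volume : Measure (EuclideanSpace ℝ (Fin d))).prod (volume.restrict (Ioi 0))) := by
  rw [MeasureTheory.integrable_prod_iff (Fker_meas d t y)]
  constructor
  · exact ae_of_all _ fun ξ => Fker_slice_integrable d ht y ξ
  · have heq : (fun ξ : EuclideanSpace ℝ (Fin d) =>
        ∫ u in Ioi (0:ℝ), ‖Function.uncurry (Fker d t y) (ξ, u)‖)
        = fun ξ => rexp (-(t * √(1 + ‖ξ‖^2))) := by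
      funext ξ
      have hs : (0:ℝ) < 1 + ‖ξ‖^2 := by positivity
      simp only [Function.uncurry_apply_pair]
      rw [setIntegral_congr_fun measurableSet_Ioi (Fker_norm d ht y ξ), rho_integral ht hs]
    rw [heq]
    exact symbol_integrable d ht

set_option maxHeartbeats 1000000 in
lemma kernel_eq (d : ℕ) {t : ℝ} (ht : 0 < t) (y : EuclideanSpace ℝ (Fin d)) :
    𝓕⁻ (fun ξ : EuclideanSpace ℝ (Fin d) => ((rexp (-(t * √(1 + ‖ξ‖^2))) : ℝ) : ℂ)) y
      = ((∫ u in Ioi (0:ℝ), rho t u * rexp (-u) *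
          ((π/u) ^ ((d:ℝ)/2) * rexp (-(π^2 * ‖y‖^2)/u)) : ℝ) : ℂ) := by
  rw [Real.fourierInv_eq]
  have step2 : (∫ ξ, 𝐞 ⟪ξ, y⟫ • ((rexp (-(t * √(1 + ‖ξ‖^2))) : ℝ) : ℂ))
      = ∫ ξ, ∫ u in Ioi (0:ℝ), Fker d t y ξ u := by
    congr 1
    funext ξ
    rw [symbol_eq_integral d ht ξ, Circle.smul_def, smul_eq_mul,
      ← MeasureTheory.integral_const_mul]
    rfl
  rw [step2, MeasureTheory.integral_integral_swap (Fker_int d ht y)]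
  have hinner : ∀ u ∈ Ioi (0:ℝ),
      (∫ ξ, Fker d t y ξ u) = (((rho t u * rexp (-u) *
        ((π/u) ^ ((d:ℝ)/2) * rexp (-(π^2 * ‖y‖^2)/u))) : ℝ) : ℂ) := by
    intro u hu
    have hsplit : ∀ ξ : EuclideanSpace ℝ (Fin d), Fker d t y ξ u
        = (rho t u * rexp (-u)) •
            ((𝐞 ⟪ξ, y⟫ : Circle) • ((rexp (-(u * ‖ξ‖^2)) : ℝ) : ℂ)) := by
      intro ξ
      simp only [Fker, Circle.smul_def, smul_eq_mul, Complex.real_smul]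
      rw [show rexp (-(u * (1+‖ξ‖^2))) = rexp (-u) * rexp (-(u * ‖ξ‖^2)) from by
        rw [← Real.exp_add]; congr 1; ring]
      push_cast
      ring
    simp only [hsplit]
    rw [MeasureTheory.integral_smul, ← Real.fourierInv_eq,
      gauss_fourier d hu y, Complex.real_smul]
    push_cast
    ring
  rw [setIntegral_congr_fun measurableSet_Ioi hinner]
  exact integral_ofReal

/-- The kernel. -/
def kk (d : ℕ) (t : ℝ) (y : EuclideanSpace ℝ (Fin d)) : ℝ :=
  ∫ u in Ioi (0:ℝ), rho t u * rexp (-u) * ((π/u) ^ ((d:ℝ)/2) * rexp (-(π^2 * ‖y‖^2)/u))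

lemma kernel_eq' (d : ℕ) {t : ℝ} (ht : 0 < t) (y : EuclideanSpace ℝ (Fin d)) :
    𝓕⁻ (fun ξ : EuclideanSpace ℝ (Fin d) => ((rexp (-(t * √(1 + ‖ξ‖^2))) : ℝ) : ℂ)) y
      = ((kk d t y : ℝ) : ℂ) := kernel_eq d ht y

lemma kk_nonneg (d : ℕ) {t : ℝ} (ht : 0 < t) (y : EuclideanSpace ℝ (Fin d)) :
    0 ≤ kk d t y := by
  apply setIntegral_nonneg measurableSet_Ioi
  intro u hu
  have hu0 : (0:ℝ) < u := hu
  have h1 : (0:ℝ) ≤ (π/u) ^ ((d:ℝ)/2) :=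
    Real.rpow_nonneg (div_nonneg Real.pi_pos.le hu0.le) _
  exact mul_nonneg (mul_nonneg (rho_nonneg ht.le hu) (Real.exp_pos _).le)
    (mul_nonneg h1 (Real.exp_pos _).le)

/-- The integrand for the second Fubini argument. -/
def Hker (d : ℕ) (t : ℝ) (y : EuclideanSpace ℝ (Fin d)) (u : ℝ) : ℝ :=
  rho t u * rexp (-u) * ((π/u) ^ ((d:ℝ)/2) * rexp (-(π^2 * ‖y‖^2)/u))

lemma Hker_meas (d : ℕ) (t : ℝ) :
    AEStronglyMeasurable (Function.uncurry (Hker d t))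
      ((volume : Measure (EuclideanSpace ℝ (Fin d))).prod (volume.restrict (Ioi 0))) := by
  apply Measurable.aestronglyMeasurable
  apply Measurable.mul
  · exact ((rho_measurable t).comp measurable_snd).mul (by fun_prop)
  · apply Measurable.mul
    · exact (by fun_prop :
        Measurable fun p : EuclideanSpace ℝ (Fin d) × ℝ => (π/p.2) ^ ((d:ℝ)/2))
    · apply Real.measurable_exp.comp
      fun_prop

lemma Hker_int (d : ℕ) {t : ℝ} (ht : 0 < t) :
    Integrable (Function.uncurry (Hker d t))
      ((volume : Measure (EuclideanSpace ℝ (Fin d))).prod (volume.restrict (Ioi 0))) := by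
  rw [MeasureTheory.integrable_prod_iff' (Hker_meas d t)]
  constructor
  · filter_upwards [self_mem_ae_restrict measurableSet_Ioi] with u hu
    simp only [Function.uncurry_apply_pair, Hker]
    exact (gauss_integrable d hu).const_mul _
  · have hbase : IntegrableOn (fun u : ℝ => rho t u * rexp (-u)) (Ioi 0) := by
      have := rho_integrableOn ht one_pos
      simpa using this
    apply hbase.congr
    filter_upwards [self_mem_ae_restrict measurableSet_Ioi] with u hu
    have hu0 : (0:ℝ) < u := hu
    have hpos : ∀ y : EuclideanSpace ℝ (Fin d), 0 ≤ Hker d t y u := by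
      intro y
      have h1 : (0:ℝ) ≤ (π/u) ^ ((d:ℝ)/2) :=
        Real.rpow_nonneg (div_nonneg Real.pi_pos.le hu0.le) _
      exact mul_nonneg (mul_nonneg (rho_nonneg ht.le hu) (Real.exp_pos _).le)
        (mul_nonneg h1 (Real.exp_pos _).le)
    have heq : (fun y : EuclideanSpace ℝ (Fin d) => ‖Function.uncurry (Hker d t) (y, u)‖)
        = fun y => (rho t u * rexp (-u)) * ((π/u) ^ ((d:ℝ)/2) * rexp (-(π^2 * ‖y‖^2)/u)) := by
      funext y
      simp only [Function.uncurry_apply_pair]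
      rw [Real.norm_eq_abs, abs_of_nonneg (hpos y)]
      rfl
    rw [heq, MeasureTheory.integral_const_mul, gauss_integral d hu, mul_one]

lemma kk_integrable (d : ℕ) {t : ℝ} (ht : 0 < t) : Integrable (kk d t) :=
  (Hker_int d ht).integral_prod_left

lemma kk_integral_le (d : ℕ) {t : ℝ} (ht : 0 < t) : ∫ y, kk d t y ≤ 1 := by
  have hswap := MeasureTheory.integral_integral_swap (Hker_int d ht)
  have hkk : (∫ y, kk d t y) = ∫ u in Ioi (0:ℝ), ∫ y : EuclideanSpace ℝ (Fin d), Hker d t y u :=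
    hswap
  rw [hkk]
  have hval : ∀ u ∈ Ioi (0:ℝ), (∫ y : EuclideanSpace ℝ (Fin d), Hker d t y u)
      = rho t u * rexp (-u) := by
    intro u hu
    have : (fun y : EuclideanSpace ℝ (Fin d) => Hker d t y u)
        = fun y => (rho t u * rexp (-u)) * ((π/u) ^ ((d:ℝ)/2) * rexp (-(π^2 * ‖y‖^2)/u)) := rfl
    rw [this, MeasureTheory.integral_const_mul, gauss_integral d hu, mul_one]
  rw [setIntegral_congr_fun measurableSet_Ioi hval]
  have hfin : ∫ u in Ioi (0:ℝ), rho t u * rexp (-u) = rexp (-t) := by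
    have h := rho_integral ht one_pos
    simpa using h
  rw [hfin]
  exact Real.exp_le_one_iff.mpr (by linarith)

end ExpBracketAux

open ExpBracketAux

/-- **Uniform `L^∞` boundedness of the multipliers `e^{λ⟨D⟩}`, `λ ≤ 0`.**
For every `λ ≤ 0`, the Fourier multiplier `a(D)` with symbol `a(ξ) = e^{λ⟨ξ⟩}`,
`⟨ξ⟩ = (1+|ξ|²)^{1/2}`, realized as convolution with the inverse Fourier transform of the
symbol, is bounded on `L^∞(ℝ^d)` with operator norm bounded by a constant `K` independent
of `λ`: `‖a(D)f‖_{L^∞} ≤ K ‖f‖_{L^∞}`. -/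
theorem exp_bracket_multiplier_Linfty_bounded (d : ℕ) :
    ∃ K > 0, ∀ l : ℝ, l ≤ 0 →
      ∀ (f : EuclideanSpace ℝ (Fin d) → ℂ) (M : ℝ), Measurable f → (∀ x, ‖f x‖ ≤ M) →
      ∀ x : EuclideanSpace ℝ (Fin d),
        ‖∫ y, 𝓕⁻ (fun ξ : EuclideanSpace ℝ (Fin d) =>
            ((Real.exp (l * Real.sqrt (1 + ‖ξ‖ ^ 2)) : ℝ) : ℂ)) y * f (x - y)‖ ≤ K * M := by
  refine ⟨1, one_pos, ?_⟩
  intro l hl f M hfm hM x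
  have hM0 : 0 ≤ M := (norm_nonneg _).trans (hM x)
  rcases hl.lt_or_eq with hl0 | rfl
  · -- case l < 0
    set t : ℝ := -l with ht'
    have ht : 0 < t := by simp [ht']; linarith
    have hg : (fun ξ : EuclideanSpace ℝ (Fin d) => ((rexp (l * √(1 + ‖ξ‖^2)) : ℝ) : ℂ))
        = fun ξ : EuclideanSpace ℝ (Fin d) => ((rexp (-(t * √(1 + ‖ξ‖^2))) : ℝ) : ℂ) := by
      funext ξ
      rw [show l * √(1 + ‖ξ‖^2) = -(t * √(1 + ‖ξ‖^2)) by rw [ht']; ring]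
    rw [hg]
    simp only [kernel_eq' d ht]
    calc ‖∫ y, ((kk d t y : ℝ) : ℂ) * f (x - y)‖
        ≤ ∫ y, ‖((kk d t y : ℝ) : ℂ) * f (x - y)‖ := norm_integral_le_integral_norm _
      _ ≤ ∫ y, kk d t y * M := by
          apply integral_mono_of_nonneg (ae_of_all _ fun y => norm_nonneg _)
            ((kk_integrable d ht).mul_const M)
          apply ae_of_all
          intro y
          show ‖((kk d t y : ℝ) : ℂ) * f (x - y)‖ ≤ kk d t y * M
          rw [norm_mul, Complex.norm_real, Real.norm_eq_abs,
            abs_of_nonneg (kk_nonneg d ht y)]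
          exact mul_le_mul_of_nonneg_left (hM _) (kk_nonneg d ht y)
      _ = (∫ y, kk d t y) * M := MeasureTheory.integral_mul_const _ _
      _ ≤ 1 * M := mul_le_mul_of_nonneg_right (kk_integral_le d ht) hM0
  · -- case l = 0
    have hg1 : (fun ξ : EuclideanSpace ℝ (Fin d) => ((rexp (0 * √(1 + ‖ξ‖^2)) : ℝ) : ℂ))
        = fun _ : EuclideanSpace ℝ (Fin d) => (1:ℂ) := by
      funext ξ
      norm_num
    rw [hg1]
    by_cases hd : d = 0
    · subst hd
      haveI hsub : Subsingleton (EuclideanSpace ℝ (Fin 0)) :=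
        ⟨fun a b => by ext i; exact i.elim0⟩
      have hvol : (volume : Measure (EuclideanSpace ℝ (Fin 0))) univ = 1 := by
        have e := EuclideanSpace.volume_preserving_symm_measurableEquiv_toLp (Fin 0)
        have h1 := e.measure_preimage (MeasurableSet.univ).nullMeasurableSet
        rw [Set.preimage_univ] at h1
        rw [h1]
        rw [MeasureTheory.volume_pi, Measure.pi_univ]
        simp
      have hker : ∀ y, 𝓕⁻ (fun _ : EuclideanSpace ℝ (Fin 0) => (1:ℂ)) y = 1 := by
        intro y
        rw [Real.fourierInv_eq]
        have h1 : ∀ ξ : EuclideanSpace ℝ (Fin 0), 𝐞 ⟪ξ, y⟫ • (1:ℂ) = 1 := by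
          intro ξ
          rw [show (⟪ξ, y⟫ : ℝ) = 0 from by
            rw [Subsingleton.elim ξ 0, inner_zero_left]]
          simp
        simp only [h1]
        rw [MeasureTheory.integral_const, measureReal_def, hvol]
        simp
      simp only [hker, one_mul]
      have hfx : ∀ y : EuclideanSpace ℝ (Fin 0), f (x - y) = f x :=
        fun y => congrArg f (Subsingleton.elim _ _)
      simp only [hfx]
      rw [MeasureTheory.integral_const, measureReal_def, hvol]
      simpa using hM x
    · haveI : Nonempty (Fin d) := ⟨⟨0, Nat.pos_of_ne_zero hd⟩⟩
      have hvol : (volume : Measure (EuclideanSpace ℝ (Fin d))) univ = ⊤ :=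
        measure_univ_of_isAddLeftInvariant volume
      have hker : ∀ y, 𝓕⁻ (fun _ : EuclideanSpace ℝ (Fin d) => (1:ℂ)) y = 0 := by
        intro y
        rw [Real.fourierInv_eq]
        apply MeasureTheory.integral_undef
        intro hcon
        have h2 := hcon.norm
        have h3 : Integrable (fun _ : EuclideanSpace ℝ (Fin d) => (1:ℝ)) := by
          apply h2.congr
          apply ae_of_all
          intro ξ
          show ‖𝐞 ⟪ξ, y⟫ • (1:ℂ)‖ = 1
          rw [Circle.norm_smul, norm_one]
        rw [integrable_const_iff] at h3
        rcases h3 with h | h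
        · exact absurd h one_ne_zero
        · have h := measure_lt_top (volume : Measure (EuclideanSpace ℝ (Fin d))) univ
          rw [hvol] at h
          exact absurd h (lt_irrefl _)
      simp only [hker, zero_mul, MeasureTheory.integral_zero, norm_zero]
      nlinarith
end
end

section
/- Consider a classical solution (η, v, P) of the free-boundary incompressible irrotational Euler equations in a canal Ω(t) = {(x₁,x₂,y) ∈ (0,1)×ℝ×ℝ : b(x) < y < η(t,x)}, with vertical walls Γ₂ = {x₁ ∈ {0,1}}, satisfying v·n = 0 on the walls, P = 0 on the free surface Σ(t) = {y = η(t,x)}, η(t,x) ≥ b(x) + h for some h > 0, and with continuous nonvanishing Taylor coefficient a(t,x) = −∂_y P(t,x,η(t,x)). Then at every point of Σ(t) ∩ Γ₂ the free surface meets the wall at a right angle: ∂_{x₁}η(t, x₁, x₂) = 0 for x₁ ∈ {0,1}. -/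
open Set

noncomputable section

/-- **Right angle between the free surface and the vertical walls of the canal.**
Let `(η, v, P)` be a classical (`C¹`) solution on `[0,T]` of the free-boundary
incompressible irrotational Euler equations in the canal
`Ω(t) = {(x₁,x₂,y) : 0 < x₁ < 1, b(x) < y < η(t,x)}`, i.e.
`∂_t v + (v·∇)v + ∇P = −g e_y`, `div v = 0`, `curl v = 0` in the (closed) fluid domain,
with the solid wall condition `v₁ = 0` on the vertical walls `x₁ ∈ {0,1}`, the dynamic
condition `P = 0` on the free surface `y = η(t,x)`, separation `η ≥ b + h` with `h > 0`,
and a nonvanishing Taylor coefficient `a = −∂_y P ≠ 0` on the free surface.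
Then for all `t ∈ [0,T]` the free surface meets the walls at a right angle:
`∂_{x₁} η(t, x₁, x₂) = 0` for `x₁ ∈ {0,1}`. -/
theorem canal_right_angle
    (T g h : ℝ) (hT : 0 < T) (hh : 0 < h)
    (η : ℝ × (ℝ × ℝ) → ℝ) (b : ℝ × ℝ → ℝ)
    (V : ℝ × (ℝ × ℝ × ℝ) → ℝ × ℝ × ℝ) (P : ℝ × (ℝ × ℝ × ℝ) → ℝ)
    (hηC1 : ContDiff ℝ 1 η) (hbC : Continuous b)
    (hVC1 : ContDiff ℝ 1 V) (hPC1 : ContDiff ℝ 1 P)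
    (hsep : ∀ t x, b x + h ≤ η (t, x))
    -- the closed space-time fluid domain
    (D : Set (ℝ × (ℝ × ℝ × ℝ)))
    (hD : D = {p : ℝ × (ℝ × ℝ × ℝ) | p.1 ∈ Icc 0 T ∧ p.2.1 ∈ Icc (0 : ℝ) 1 ∧
      b (p.2.1, p.2.2.1) ∈ Iic p.2.2.2 ∧ p.2.2.2 ≤ η (p.1, (p.2.1, p.2.2.1))})
    -- Euler equation: ∂_t v + (v·∇)v + ∇P = −g e_y on the closed domain
    (hEuler : ∀ p ∈ D,
      fderiv ℝ V p (1, V p) +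
        (fderiv ℝ P p (0, (1, 0, 0)), fderiv ℝ P p (0, (0, 1, 0)), fderiv ℝ P p (0, (0, 0, 1)))
        = (0, 0, -g))
    -- incompressibility: div v = 0
    (hdiv : ∀ p ∈ D,
      (fderiv ℝ V p (0, (1, 0, 0))).1 + (fderiv ℝ V p (0, (0, 1, 0))).2.1 +
        (fderiv ℝ V p (0, (0, 0, 1))).2.2 = 0)
    -- irrotationality: curl v = 0
    (hcurl : ∀ p ∈ D,
      (fderiv ℝ V p (0, (1, 0, 0))).2.1 = (fderiv ℝ V p (0, (0, 1, 0))).1 ∧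
      (fderiv ℝ V p (0, (1, 0, 0))).2.2 = (fderiv ℝ V p (0, (0, 0, 1))).1 ∧
      (fderiv ℝ V p (0, (0, 1, 0))).2.2 = (fderiv ℝ V p (0, (0, 0, 1))).2.1)
    -- solid wall condition on the vertical walls x₁ = 0 and x₁ = 1
    (hwall : ∀ t ∈ Icc 0 T, ∀ ε ∈ ({0, 1} : Set ℝ), ∀ x₂ y : ℝ,
      b (ε, x₂) ≤ y → y ≤ η (t, (ε, x₂)) → (V (t, (ε, x₂, y))).1 = 0)
    -- dynamic condition: P = 0 on the free surface
    (hsurf : ∀ t ∈ Icc 0 T, ∀ x₁ ∈ Icc (0 : ℝ) 1, ∀ x₂ : ℝ,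
      P (t, (x₁, x₂, η (t, (x₁, x₂)))) = 0)
    -- nonvanishing Taylor coefficient a = −∂_y P on the free surface
    (hTaylor : ∀ t ∈ Icc 0 T, ∀ x₁ ∈ Icc (0 : ℝ) 1, ∀ x₂ : ℝ,
      fderiv ℝ P (t, (x₁, x₂, η (t, (x₁, x₂)))) (0, (0, 0, 1)) ≠ 0) :
    ∀ t ∈ Icc 0 T, ∀ ε ∈ ({0, 1} : Set ℝ), ∀ x₂ : ℝ,
      fderiv ℝ η (t, (ε, x₂)) (0, (1, 0)) = 0 := by
  intro t ht ε hε x₂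
  have hε' := hε
  simp only [mem_insert_iff, mem_singleton_iff] at hε'
  have hε01 : ε ∈ Icc (0:ℝ) 1 := by
    rcases hε' with rfl | rfl
    exacts [⟨le_refl _, zero_le_one⟩, ⟨zero_le_one, le_refl _⟩]
  have hVdiff : Differentiable ℝ V := hVC1.differentiable one_ne_zero
  have hPdiff : Differentiable ℝ P := hPC1.differentiable one_ne_zero
  have hηdiff : Differentiable ℝ η := hηC1.differentiable one_ne_zero
  have hηcont : Continuous η := hηC1.continuous
  -- Step A: tangential derivatives of V₁ vanish on the open wall
  have hA : ∀ t' ∈ Ioo (0:ℝ) T, ∀ y : ℝ, b (ε, x₂) < y → y < η (t', (ε, x₂)) →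
      ∀ e : ℝ × (ℝ × ℝ × ℝ), e.2.1 = 0 → (fderiv ℝ V (t', (ε, x₂, y)) e).1 = 0 := by
    intro t' ht' y hby hyη e he
    obtain ⟨e1, e2, e3, e4⟩ := e
    simp only at he
    subst he
    set p : ℝ × (ℝ × ℝ × ℝ) := (t', (ε, x₂, y)) with hp
    have hline : HasDerivAt (fun s : ℝ => p + s • ((e1, 0, e3, e4) : ℝ × (ℝ × ℝ × ℝ)))
        ((e1, 0, e3, e4) : ℝ × (ℝ × ℝ × ℝ)) 0 := by
      have h1 : HasDerivAt (fun s : ℝ => s • ((e1, 0, e3, e4) : ℝ × (ℝ × ℝ × ℝ)))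
          ((1:ℝ) • ((e1, 0, e3, e4) : ℝ × (ℝ × ℝ × ℝ))) 0 :=
        (hasDerivAt_id 0).smul_const _
      simpa using h1.const_add p
    have hu : HasFDerivAt (fun q => (V q).1)
        ((ContinuousLinearMap.fst ℝ ℝ (ℝ × ℝ)).comp (fderiv ℝ V p))
        ((fun s : ℝ => p + s • ((e1, 0, e3, e4) : ℝ × (ℝ × ℝ × ℝ))) 0) := by
      have := (ContinuousLinearMap.fst ℝ ℝ (ℝ × ℝ)).hasFDerivAt.comp p
        (hVdiff p).hasFDerivAt
      simpa [Function.comp_def] using this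
    have hF : HasDerivAt (fun s : ℝ => (V (p + s • ((e1, 0, e3, e4) : ℝ × (ℝ × ℝ × ℝ)))).1)
        ((fderiv ℝ V p ((e1, 0, e3, e4) : ℝ × (ℝ × ℝ × ℝ))).1) 0 := by
      have := hu.comp_hasDerivAt 0 hline
      simpa [Function.comp_def] using this
    have hev : (fun s : ℝ => (V (p + s • ((e1, 0, e3, e4) : ℝ × (ℝ × ℝ × ℝ)))).1)
        =ᶠ[nhds (0:ℝ)] fun _ => 0 := by
      have hc1 : ∀ᶠ s : ℝ in nhds 0, t' + s * e1 ∈ Ioo (0:ℝ) T := by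
        have hc : ContinuousAt (fun s : ℝ => t' + s * e1) 0 := by fun_prop
        exact hc.eventually_mem (isOpen_Ioo.mem_nhds (by simpa using ht'))
      have hc2 : ∀ᶠ s : ℝ in nhds 0, b (ε, x₂ + s * e3) < y + s * e4 := by
        have hf : ContinuousAt (fun s : ℝ => b (ε, x₂ + s * e3)) 0 := by
          exact (hbC.comp (by fun_prop : Continuous fun s : ℝ => ((ε, x₂ + s * e3) : ℝ × ℝ))).continuousAt
        have hg : ContinuousAt (fun s : ℝ => y + s * e4) 0 := by fun_prop
        have := hf.eventually_lt hg (by simpa using hby)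
        exact this
      have hc3 : ∀ᶠ s : ℝ in nhds 0, y + s * e4 < η (t' + s * e1, (ε, x₂ + s * e3)) := by
        have hf : ContinuousAt (fun s : ℝ => y + s * e4) 0 := by fun_prop
        have hg : ContinuousAt (fun s : ℝ => η (t' + s * e1, (ε, x₂ + s * e3))) 0 := by
          exact (hηcont.comp (by fun_prop :
            Continuous fun s : ℝ => ((t' + s * e1, (ε, x₂ + s * e3)) : ℝ × (ℝ × ℝ)))).continuousAt
        have := hf.eventually_lt hg (by simpa using hyη)
        exact this
      filter_upwards [hc1, hc2, hc3] with s h1 h2 h3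
      have hps : p + s • ((e1, 0, e3, e4) : ℝ × (ℝ × ℝ × ℝ))
          = (t' + s * e1, (ε, x₂ + s * e3, y + s * e4)) := by
        simp [hp, Prod.ext_iff]
      rw [hps]
      exact hwall _ ⟨h1.1.le, h1.2.le⟩ ε hε _ _ h2.le h3.le
    exact hF.unique ((hasDerivAt_const 0 (0:ℝ)).congr_of_eventuallyEq hev)
  -- Step B: ∂ₓ₁ P = 0 on the open wall
  have hB : ∀ t' ∈ Ioo (0:ℝ) T, ∀ y : ℝ, b (ε, x₂) < y → y < η (t', (ε, x₂)) →
      fderiv ℝ P (t', (ε, x₂, y)) (0, (1, 0, 0)) = 0 := by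
    intro t' ht' y hby hyη
    set p : ℝ × (ℝ × ℝ × ℝ) := (t', (ε, x₂, y)) with hp
    have hpD : p ∈ D := by
      rw [hD]
      exact ⟨Ioo_subset_Icc_self ht', hε01, hby.le, hyη.le⟩
    have hE := hEuler p hpD
    have hV1 : (V p).1 = 0 := hwall t' (Ioo_subset_Icc_self ht') ε hε x₂ y hby.le hyη.le
    have h1 := hA t' ht' y hby hyη (1, (0, 0, 0)) rfl
    have h2 := hA t' ht' y hby hyη (0, (0, 1, 0)) rfl
    have h3 := hA t' ht' y hby hyη (0, (0, 0, 1)) rfl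
    have hsplit : ((1:ℝ), V p) = ((1:ℝ), ((0:ℝ), (0:ℝ), (0:ℝ)))
        + (V p).2.1 • ((0:ℝ), ((0:ℝ), (1:ℝ), (0:ℝ)))
        + (V p).2.2 • ((0:ℝ), ((0:ℝ), (0:ℝ), (1:ℝ))) := by
      simp [Prod.ext_iff, hV1]
    have hfirst : (fderiv ℝ V p (1, V p)).1 = 0 := by
      rw [hsplit, map_add, map_add, map_smul, map_smul, Prod.fst_add, Prod.fst_add,
        Prod.smul_fst, Prod.smul_fst, hp, h1, h2, h3]
      simp
    have hE1 := congrArg Prod.fst hE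
    simp only [Prod.fst_add] at hE1
    rw [hfirst] at hE1
    simpa using hE1
  -- Step C: ∂ₓ₁ P = 0 at the surface corner point, by continuity
  set sP : ℝ × (ℝ × ℝ × ℝ) := (t, (ε, x₂, η (t, (ε, x₂)))) with hsP
  set q : ℝ × (ℝ × ℝ × ℝ) → ℝ :=
    fun p => fderiv ℝ P p ((0:ℝ), ((1:ℝ), (0:ℝ), (0:ℝ))) with hq
  have hqc : Continuous q := (hPC1.continuous_fderiv one_ne_zero).clm_apply continuous_const
  set γ : ℝ → ℝ × (ℝ × ℝ × ℝ) := fun l =>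
    ((1 - l) * t + l * (T / 2),
      (ε, x₂, η ((1 - l) * t + l * (T / 2), (ε, x₂)) - h * l)) with hγdef
  have hγ : Continuous γ := by
    apply Continuous.prodMk (by fun_prop)
    apply Continuous.prodMk continuous_const
    apply Continuous.prodMk continuous_const
    exact (hηcont.comp (by fun_prop)).sub (by fun_prop)
  have hγ0 : γ 0 = sP := by simp [hγdef, hsP]
  have hqγ : ∀ l ∈ Ioo (0:ℝ) 1, q (γ l) = 0 := by
    intro l hl
    have htl : (1 - l) * t + l * (T / 2) ∈ Ioo (0:ℝ) T := by
      constructor <;> nlinarith [ht.1, ht.2, hl.1, hl.2]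
    have hsep' := hsep ((1 - l) * t + l * (T / 2)) (ε, x₂)
    exact hB _ htl _ (by nlinarith [hl.1, hl.2, hh]) (by nlinarith [hh, hl.1])
  have hq0 : q sP = 0 := by
    have h1 : Filter.Tendsto (fun l => q (γ l)) (nhdsWithin 0 (Ioi (0:ℝ))) (nhds (q sP)) := by
      have hc : ContinuousAt (fun l => q (γ l)) 0 := (hqc.comp hγ).continuousAt
      have h' : Filter.Tendsto (fun l => q (γ l)) (nhds 0) (nhds (q sP)) := by
        rw [← hγ0]; exact hc
      exact h'.mono_left nhdsWithin_le_nhds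
    have h2 : Filter.Tendsto (fun l => q (γ l)) (nhdsWithin 0 (Ioi (0:ℝ))) (nhds 0) := by
      apply Filter.Tendsto.congr' _ tendsto_const_nhds
      filter_upwards [Ioo_mem_nhdsGT_of_mem (⟨le_refl (0:ℝ), zero_lt_one⟩ : (0:ℝ) ∈ Ico (0:ℝ) 1)]
        with l hl
      exact (hqγ l hl).symm
    exact tendsto_nhds_unique h1 h2
  -- Step D: differentiate P = 0 along the surface in the x₁ direction (one-sided)
  have key : ∀ σ : ℝ, σ ≠ 0 → (∀ s ∈ Icc (0:ℝ) 1, ε + σ * s ∈ Icc (0:ℝ) 1) →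
      fderiv ℝ η (t, (ε, x₂)) (0, (1, 0)) = 0 := by
    intro σ hσ hrange
    set Dη : ℝ := fderiv ℝ η (t, (ε, x₂)) ((0:ℝ), ((1:ℝ), (0:ℝ))) with hDη
    have c0 : HasDerivAt (fun _ : ℝ => t) 0 0 := hasDerivAt_const 0 t
    have c1 : HasDerivAt (fun s : ℝ => ε + σ * s) σ 0 := by
      simpa using ((hasDerivAt_id (0:ℝ)).const_mul σ).const_add ε
    have c2 : HasDerivAt (fun _ : ℝ => x₂) 0 0 := hasDerivAt_const 0 x₂
    have cin : HasDerivAt (fun s : ℝ => ((t, (ε + σ * s, x₂)) : ℝ × (ℝ × ℝ)))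
        ((0:ℝ), (σ, (0:ℝ))) 0 := c0.prodMk (c1.prodMk c2)
    have hηF : HasFDerivAt η (fderiv ℝ η (t, (ε, x₂)))
        ((fun s : ℝ => ((t, (ε + σ * s, x₂)) : ℝ × (ℝ × ℝ))) 0) := by
      simpa using (hηdiff (t, (ε, x₂))).hasFDerivAt
    have c3 : HasDerivAt (fun s : ℝ => η (t, (ε + σ * s, x₂))) (σ * Dη) 0 := by
      have := hηF.comp_hasDerivAt 0 cin
      have hv : fderiv ℝ η (t, (ε, x₂)) ((0:ℝ), (σ, (0:ℝ))) = σ * Dη := by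
        have : ((0:ℝ), (σ, (0:ℝ))) = σ • (((0:ℝ), ((1:ℝ), (0:ℝ))) : ℝ × (ℝ × ℝ)) := by
          simp [Prod.ext_iff]
        rw [this, map_smul, hDη, smul_eq_mul]
      rw [hv] at this
      simpa [Function.comp_def] using this
    have hGd : HasDerivAt
        (fun s : ℝ => ((t, (ε + σ * s, x₂, η (t, (ε + σ * s, x₂)))) : ℝ × (ℝ × ℝ × ℝ)))
        (((0:ℝ), (σ, (0:ℝ), σ * Dη)) : ℝ × (ℝ × ℝ × ℝ)) 0 :=
      c0.prodMk (c1.prodMk (c2.prodMk c3))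
    have hPF : HasFDerivAt P (fderiv ℝ P sP)
        ((fun s : ℝ => ((t, (ε + σ * s, x₂, η (t, (ε + σ * s, x₂)))) : ℝ × (ℝ × ℝ × ℝ))) 0) := by
      simpa [hsP] using (hPdiff sP).hasFDerivAt
    have hg : HasDerivAt (fun s : ℝ => P (t, (ε + σ * s, x₂, η (t, (ε + σ * s, x₂)))))
        (fderiv ℝ P sP ((0:ℝ), (σ, (0:ℝ), σ * Dη))) 0 := by
      have := hPF.comp_hasDerivAt 0 hGd
      simpa [Function.comp_def] using this
    have hval : fderiv ℝ P sP ((0:ℝ), (σ, (0:ℝ), σ * Dη))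
        = σ * q sP + (σ * Dη) * fderiv ℝ P sP ((0:ℝ), ((0:ℝ), (0:ℝ), (1:ℝ))) := by
      have hsplit : (((0:ℝ), (σ, (0:ℝ), σ * Dη)) : ℝ × (ℝ × ℝ × ℝ))
          = σ • (((0:ℝ), ((1:ℝ), (0:ℝ), (0:ℝ))) : ℝ × (ℝ × ℝ × ℝ))
            + (σ * Dη) • (((0:ℝ), ((0:ℝ), (0:ℝ), (1:ℝ))) : ℝ × (ℝ × ℝ × ℝ)) := by
        simp [Prod.ext_iff]
      rw [hsplit, map_add, map_smul, map_smul, smul_eq_mul, smul_eq_mul]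
    have hgz : HasDerivWithinAt (fun s : ℝ => P (t, (ε + σ * s, x₂, η (t, (ε + σ * s, x₂)))))
        0 (Ici (0:ℝ)) 0 := by
      apply (hasDerivWithinAt_const (0:ℝ) (Ici (0:ℝ)) (0:ℝ)).congr_of_eventuallyEq
      · filter_upwards [Ico_mem_nhdsGE_of_mem
          (⟨le_refl (0:ℝ), zero_lt_one⟩ : (0:ℝ) ∈ Ico (0:ℝ) 1)] with s hs
        exact hsurf t ht _ (hrange s ⟨hs.1, hs.2.le⟩) x₂
      · have := hsurf t ht ε hε01 x₂
        simpa using this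
    have huniq : UniqueDiffWithinAt ℝ (Ici (0:ℝ)) 0 := uniqueDiffOn_Ici 0 0 self_mem_Ici
    have e1 := (hg.hasDerivWithinAt (s := Ici (0:ℝ))).derivWithin huniq
    have e2 := hgz.derivWithin huniq
    have hzero : fderiv ℝ P sP ((0:ℝ), (σ, (0:ℝ), σ * Dη)) = 0 := e1.symm.trans e2
    rw [hval, hq0] at hzero
    have ha := hTaylor t ht ε hε01 x₂
    have ha' : fderiv ℝ P sP ((0:ℝ), ((0:ℝ), (0:ℝ), (1:ℝ))) ≠ 0 := by
      simpa [hsP] using ha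
    have : σ * Dη = 0 := by
      rcases mul_eq_zero.1 (by linarith : (σ * Dη) * fderiv ℝ P sP ((0:ℝ), ((0:ℝ), (0:ℝ), (1:ℝ))) = 0) with h | h
      · exact h
      · exact absurd h ha'
    rcases mul_eq_zero.1 this with h | h
    · exact absurd h hσ
    · exact h
  rcases hε' with h0 | h1
  · subst h0
    refine key 1 one_ne_zero ?_
    intro s hs
    constructor
    · linarith [hs.1]
    · linarith [hs.2]
  · subst h1
    refine key (-1) (by norm_num) ?_
    intro s hs
    constructor
    · nlinarith [hs.1, hs.2]
    · nlinarith [hs.1]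
end
end
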